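/- Let σ > 0 and c ≥ 0. Set κ_c(r) = exp(−(r² + c²)/σ²) · I₀(2rc/σ²) for r ≥ 0, and let p: ℂ → ℝ be the density p(w) = κ_c(|w|)/(πσ²). Then the differential entropy of p minus the Gaussian noise entropy equals the one-dimensional integral expression: −∫_ℂ p(w) ln p(w) dw − ln(π e σ²) = −∫_0^∞ (2r/σ²) · κ_c(r) · ln κ_c(r) dr − 1. (This is the paper's Theorem 1: the mutual information I(X₂; Y | X₁ = x₁) of the phase-modulated channel Y = c e^{iΘ} + Z with c = |h x₁|, Θ uniform on [−π,π), Z ~ CN(0,σ²), expressed in nats.) -/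

import Mathlib

open MeasureTheory Real

/-- The modified Bessel function of the first kind of order zero:
`I₀(x) = (1/(2π)) ∫_{−π}^{π} e^{x cos θ} dθ`. -/
noncomputable def I0 (x : ℝ) : ℝ := (1 / (2 * π)) * ∫ θ in (-π)..π, Real.exp (x * Real.cos θ)

/-- `κ_c(r) = exp(−(r² + c²)/σ²) · I₀(2rc/σ²)`. -/
noncomputable def kappa (σ c r : ℝ) : ℝ :=
  Real.exp (-(r ^ 2 + c ^ 2) / σ ^ 2) * I0 (2 * r * c / σ ^ 2)

open Set

lemma continuous_I0 : Continuous I0 := by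
  apply Continuous.mul continuous_const
  exact intervalIntegral.continuous_parametric_intervalIntegral_of_continuous'
    (by fun_prop) _ _

lemma I0_ge_one (x : ℝ) : 1 ≤ I0 x := by
  have h1 : ∫ θ in (-π)..π, (1 + x * Real.cos θ) ≤ ∫ θ in (-π)..π, Real.exp (x * Real.cos θ) := by
    apply intervalIntegral.integral_mono_on (by linarith [pi_pos])
    · exact (by fun_prop : Continuous fun θ : ℝ => 1 + x * Real.cos θ).intervalIntegrable _ _
    · exact (by fun_prop : Continuous fun θ : ℝ => Real.exp (x * Real.cos θ)).intervalIntegrable _ _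
    · intro θ _
      have := Real.add_one_le_exp (x * Real.cos θ)
      linarith
  have h2 : ∫ θ in (-π)..π, (1 + x * Real.cos θ) = 2 * π := by
    rw [intervalIntegral.integral_add ((by fun_prop : Continuous fun _ : ℝ => (1:ℝ)).intervalIntegrable _ _)
      ((by fun_prop : Continuous fun θ : ℝ => x * Real.cos θ).intervalIntegrable _ _),
      intervalIntegral.integral_const, intervalIntegral.integral_const_mul, integral_cos]
    simp; ring
  have hπ : 0 < 2 * π := by positivity
  rw [I0]
  calc (1:ℝ) = (1/(2*π)) * (2*π) := by field_simp
      _ ≤ (1/(2*π)) * ∫ θ in (-π)..π, Real.exp (x * Real.cos θ) := by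
          apply mul_le_mul_of_nonneg_left _ (by positivity)
          rw [← h2]; exact h1


lemma I0_le_exp {x : ℝ} (hx : 0 ≤ x) : I0 x ≤ Real.exp x := by
  have h1 : ∫ θ in (-π)..π, Real.exp (x * Real.cos θ) ≤ ∫ θ in (-π)..π, Real.exp x := by
    apply intervalIntegral.integral_mono_on (by linarith [pi_pos])
    · exact (by fun_prop : Continuous fun θ : ℝ => Real.exp (x * Real.cos θ)).intervalIntegrable _ _
    · exact ((by fun_prop : Continuous fun _ : ℝ => Real.exp x).intervalIntegrable _ _)
    · intro θ _
      apply Real.exp_le_exp.2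
      nlinarith [Real.cos_le_one θ, Real.neg_one_le_cos θ]
  rw [intervalIntegral.integral_const] at h1
  have hπ : 0 < 2 * π := by positivity
  rw [I0]
  calc (1/(2*π)) * ∫ θ in (-π)..π, Real.exp (x * Real.cos θ)
      ≤ (1/(2*π)) * ((π - -π) • Real.exp x) := by
        apply mul_le_mul_of_nonneg_left h1 (by positivity)
    _ = Real.exp x := by
        rw [smul_eq_mul]; field_simp; ring

lemma I0_pos (x : ℝ) : 0 < I0 x := lt_of_lt_of_le one_pos (I0_ge_one x)

lemma kappa_pos (σ c : ℝ) (r : ℝ) : 0 < kappa σ c r :=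
  mul_pos (Real.exp_pos _) (I0_pos _)

lemma kappa_le {σ c : ℝ} (hσ : 0 < σ) (hc : 0 ≤ c) {r : ℝ} (hr : 0 ≤ r) :
    kappa σ c r ≤ Real.exp (c^2/σ^2) * Real.exp (-(1/(2*σ^2)) * r^2) := by
  have hx : (0:ℝ) ≤ 2 * r * c / σ ^ 2 := by positivity
  have h1 : kappa σ c r ≤ Real.exp (-(r ^ 2 + c ^ 2) / σ ^ 2) * Real.exp (2 * r * c / σ ^ 2) :=
    mul_le_mul_of_nonneg_left (I0_le_exp hx) (Real.exp_pos _).le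
  rw [← Real.exp_add] at h1
  refine h1.trans ?_
  rw [← Real.exp_add, Real.exp_le_exp]
  have hσ2 : (0:ℝ) < σ^2 := by positivity
  have e1 : -(r ^ 2 + c ^ 2) / σ ^ 2 + 2 * r * c / σ ^ 2 = (2*r*c - (r^2+c^2))/σ^2 := by ring
  have e2 : c^2/σ^2 + -(1/(2*σ^2))*r^2 = (c^2 - r^2/2)/σ^2 := by
    field_simp; ring
  rw [e1, e2]
  apply div_le_div_of_nonneg_right ?_ hσ2.le |>.trans_eq rfl
  nlinarith [sq_nonneg (r - 2*c)]

lemma abs_log_kappa_le {σ c : ℝ} (hσ : 0 < σ) (hc : 0 ≤ c) {r : ℝ} (hr : 0 ≤ r) :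
    |Real.log (kappa σ c r)| ≤ (r^2 + c^2 + 2*r*c) / σ^2 := by
  have hx : (0:ℝ) ≤ 2 * r * c / σ ^ 2 := by positivity
  have hI : 0 < I0 (2 * r * c / σ ^ 2) := I0_pos _
  rw [kappa, Real.log_mul (Real.exp_pos _).ne' hI.ne', Real.log_exp]
  have h1 : 0 ≤ Real.log (I0 (2 * r * c / σ ^ 2)) :=
    Real.log_nonneg (I0_ge_one _)
  have h2 : Real.log (I0 (2 * r * c / σ ^ 2)) ≤ 2 * r * c / σ ^ 2 := by
    calc Real.log (I0 (2 * r * c / σ ^ 2)) ≤ Real.log (Real.exp (2 * r * c / σ ^ 2)) :=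
          Real.log_le_log hI (I0_le_exp hx)
      _ = 2 * r * c / σ ^ 2 := Real.log_exp _
  rw [abs_le]
  have hσ2 : (0:ℝ) < σ^2 := by positivity
  have h4 : (r^2+c^2+2*r*c)/σ^2 = (r^2+c^2)/σ^2 + (2*r*c)/σ^2 := by ring
  have h3 : (0:ℝ) ≤ (r^2+c^2)/σ^2 := by positivity
  have h5 : -(r ^ 2 + c ^ 2) / σ ^ 2 = -((r^2+c^2)/σ^2) := by ring
  constructor
  · rw [h5]; linarith
  · rw [h5]; linarith

lemma polar_int (f : ℝ → ℝ) :
    ∫ w : ℂ, f (‖w‖) = 2 * π * ∫ r in Ioi (0:ℝ), r * f r := by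
  have h := MeasureTheory.integral_fun_norm_addHaar (volume : Measure ℂ) f
  simp only [Complex.finrank_real_complex] at h
  rw [h, Measure.real, Complex.volume_ball]
  simp only [smul_eq_mul, nsmul_eq_mul, pow_one]
  rw [ENNReal.toReal_mul]
  norm_num
  ring

lemma int_r_exp {b : ℝ} (hb : 0 < b) :
    ∫ r in Ioi (0:ℝ), r * Real.exp (-b * r^2) = (2*b)⁻¹ := by
  have h := integral_mul_cexp_neg_mul_sq (b := (b:ℂ)) (by simpa using hb)
  have h2 : ∀ r : ℝ, (r : ℂ) * Complex.exp (-(b:ℂ) * (r:ℂ)^2) = ((r * Real.exp (-b * r^2) : ℝ) : ℂ) := by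
    intro r
    rw [Complex.ofReal_mul, Complex.ofReal_exp]
    push_cast
    ring
  rw [← RCLike.ofReal_inj (K := ℂ), ← integral_ofReal, ← RCLike.algebraMap_eq_ofReal,
    Complex.coe_algebraMap]
  push_cast
  exact h

lemma gauss_c {b : ℝ} (hb : 0 < b) :
    ∫ w : ℂ, Real.exp (-b * (‖w‖)^2) = π / b := by
  rw [polar_int (fun r => Real.exp (-b * r^2)), int_r_exp hb]
  field_simp

lemma integrable_gauss_c {b : ℝ} (hb : 0 < b) :
    Integrable (fun w : ℂ => Real.exp (-b * (‖w‖)^2)) := by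
  have h : Integrable (fun p : ℝ × ℝ => Real.exp (-b * p.1^2) * Real.exp (-b * p.2^2)) :=
    (integrable_exp_neg_mul_sq hb).mul_prod (integrable_exp_neg_mul_sq hb)
  simp_rw [← Real.exp_add] at h
  have h2 := (Complex.volume_preserving_equiv_real_prod.integrable_comp_emb
    Complex.measurableEquivRealProd.measurableEmbedding
    (g := fun p : ℝ × ℝ => Real.exp (-b * p.1^2 + -b * p.2^2))).2 h
  have h3 : (fun p : ℝ × ℝ => Real.exp (-b * p.1^2 + -b * p.2^2)) ∘
      Complex.measurableEquivRealProd = fun w : ℂ => Real.exp (-b * (‖w‖)^2) := by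
    funext w
    simp only [Function.comp_apply, Complex.measurableEquivRealProd_apply]
    rw [Complex.sq_norm, Complex.normSq_apply]
    ring_nf
  rwa [h3] at h2

lemma two_pi_I0 (x φ : ℝ) :
    ∫ θ in (-π)..π, Real.exp (x * Real.cos (θ - φ)) = 2 * π * I0 x := by
  have hper : Function.Periodic (fun θ => Real.exp (x * Real.cos θ)) (2*π) := by
    intro θ; simp [Real.cos_add_two_pi]
  have h1 : ∫ θ in (-π)..π, Real.exp (x * Real.cos (θ - φ))
      = ∫ θ in (-π - φ)..(π - φ), Real.exp (x * Real.cos θ) :=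
    intervalIntegral.integral_comp_sub_right (fun θ => Real.exp (x * Real.cos θ)) φ
  have h2 := hper.intervalIntegral_add_eq (-π - φ) (-π)
  rw [show -π - φ + 2*π = π - φ by ring, show -π + 2*π = π by ring] at h2
  rw [h1, h2, I0]
  have h3 : (2*π) ≠ 0 := by positivity
  field_simp

lemma key_pointwise {σ c : ℝ} (hσ : 0 < σ) (hc : 0 ≤ c) (w : ℂ) :
    kappa σ c (‖w‖)
      = (1/(2*π)) * ∫ θ in (-π)..π,
          Real.exp (-(‖w - (c : ℂ) * Complex.exp (θ * Complex.I)‖)^2 / σ^2) := by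
  set ρ := ‖w‖ with hρ
  set φ := Complex.arg w with hφ
  have habs : ∀ θ : ℝ, (‖w - (c:ℂ) * Complex.exp (θ * Complex.I)‖)^2
      = ρ^2 + c^2 - 2*ρ*c*Real.cos (θ - φ) := by
    intro θ
    have hw : (ρ:ℂ) * Complex.exp (φ * Complex.I) = w := Complex.norm_mul_exp_arg_mul_I w
    rw [Complex.sq_norm, ← hw, Complex.normSq_apply]
    simp only [Complex.exp_mul_I, Complex.sub_re, Complex.sub_im, Complex.mul_re, Complex.mul_im,
      Complex.add_re, Complex.add_im, Complex.ofReal_re, Complex.ofReal_im, Complex.I_re,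
      Complex.I_im, Complex.ofReal_cos, Complex.ofReal_sin, Complex.cos_ofReal_re,
      Complex.sin_ofReal_re, Complex.cos_ofReal_im, Complex.sin_ofReal_im]
    rw [Real.cos_sub]
    ring_nf
    nlinarith [Real.sin_sq_add_cos_sq θ, Real.sin_sq_add_cos_sq φ]
  have hint : ∀ θ : ℝ, Real.exp (-(ρ^2 + c^2 - 2*ρ*c*Real.cos (θ - φ))/σ^2)
      = Real.exp (-(ρ^2+c^2)/σ^2) * Real.exp ((2*ρ*c/σ^2) * Real.cos (θ - φ)) := by
    intro θ
    rw [← Real.exp_add]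
    congr 1
    field_simp
    ring
  simp_rw [habs, hint]
  rw [intervalIntegral.integral_const_mul, two_pi_I0, kappa]
  have h3 : (2*π) ≠ 0 := by positivity
  field_simp

lemma integral_c_kappa {σ c : ℝ} (hσ : 0 < σ) (hc : 0 ≤ c) :
    ∫ w : ℂ, kappa σ c (‖w‖) = π * σ^2 := by
  set F : ℂ → ℝ → ℝ := fun w θ =>
    Real.exp (-(‖w - (c : ℂ) * Complex.exp (θ * Complex.I)‖)^2 / σ^2) with hF
  have hπ : (0:ℝ) < π := pi_pos
  have hfin : IsFiniteMeasure (volume.restrict (Ioc (-π) π)) :=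
    ⟨by rw [Measure.restrict_apply_univ]; exact measure_Ioc_lt_top⟩
  -- continuity of uncurried F
  have hcont : Continuous (Function.uncurry F) := by
    apply Real.continuous_exp.comp
    apply Continuous.div_const
    apply Continuous.neg
    apply Continuous.pow
    apply continuous_norm.comp
    fun_prop
  -- gaussian integral over ℂ
  have hgauss : ∫ w : ℂ, Real.exp (-(‖w‖)^2 / σ^2) = π * σ^2 := by
    have h1 : ∀ w : ℂ, -(‖w‖)^2/σ^2 = -(1/σ^2) * (‖w‖)^2 := by
      intro w; ring
    simp_rw [h1]
    rw [gauss_c (by positivity)]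
    field_simp
  have hgaussInt : Integrable (fun w : ℂ => Real.exp (-(‖w‖)^2 / σ^2)) := by
    have h1 : ∀ w : ℂ, -(‖w‖)^2/σ^2 = -(1/σ^2) * (‖w‖)^2 := by
      intro w; ring
    simp_rw [h1]
    exact integrable_gauss_c (by positivity)
  -- integrability of uncurried F on the product
  have hFint : Integrable (Function.uncurry F)
      (volume.prod (volume.restrict (Ioc (-π) π))) := by
    apply Integrable.mono'
      (g := fun p : ℂ × ℝ => Real.exp (c^2/σ^2) * Real.exp (-(1/(2*σ^2)) * (‖p.1‖)^2))
    · have h2 : Integrable (fun w : ℂ =>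
          Real.exp (c^2/σ^2) * Real.exp (-(1/(2*σ^2)) * (‖w‖)^2)) :=
        (integrable_gauss_c (by positivity : (0:ℝ) < 1/(2*σ^2))).const_mul _
      have h3 := h2.mul_prod (integrable_const (1:ℝ)
        (μ := volume.restrict (Ioc (-π) π)))
      simpa using h3
    · exact hcont.aestronglyMeasurable
    · apply Filter.Eventually.of_forall
      rintro ⟨w, θ⟩
      have habs : ‖(c:ℂ) * Complex.exp (θ * Complex.I)‖ = c := by
        rw [norm_mul, Complex.norm_exp_ofReal_mul_I, Complex.norm_of_nonneg hc, mul_one]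
      have h4 : |‖w‖ - c| ≤ ‖w - (c:ℂ) * Complex.exp (θ * Complex.I)‖ := by
        have h := abs_norm_sub_norm_le w ((c:ℂ) * Complex.exp (θ * Complex.I))
        rwa [habs] at h
      have h5 : (‖w‖ - c)^2 ≤ (‖w - (c:ℂ) * Complex.exp (θ * Complex.I)‖)^2 := by
        rw [← sq_abs (‖w‖ - c)]
        exact pow_le_pow_left₀ (abs_nonneg _) h4 2
      have hσ2 : (0:ℝ) < σ^2 := by positivity
      rw [hF]
      simp only [Function.uncurry_apply_pair, Real.norm_eq_abs, abs_of_nonneg (Real.exp_pos _).le]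
      rw [← Real.exp_add, Real.exp_le_exp]
      have h6 : -(‖w - (c:ℂ) * Complex.exp (θ * Complex.I)‖)^2
          ≤ -(‖w‖ - c)^2 := by linarith
      have h7 : -(‖w - (c:ℂ) * Complex.exp (θ * Complex.I)‖)^2/σ^2
          ≤ -(‖w‖ - c)^2/σ^2 := div_le_div_of_nonneg_right h6 hσ2.le
      refine h7.trans ?_
      have hrhs : c^2/σ^2 + -(1/(2*σ^2)) * (‖w‖)^2
          = (c^2 - (‖w‖)^2/2)/σ^2 := by field_simp; ring
      rw [hrhs]
      apply div_le_div_of_nonneg_right ?_ hσ2.le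
      nlinarith [sq_nonneg (‖w‖ - 2*c)]
  -- now compute
  have step1 : ∀ w : ℂ, kappa σ c (‖w‖)
      = (1/(2*π)) * ∫ θ in Ioc (-π) π, F w θ := by
    intro w
    rw [key_pointwise hσ hc w, intervalIntegral.integral_of_le (by linarith : -π ≤ π)]
  calc ∫ w : ℂ, kappa σ c (‖w‖)
      = ∫ w : ℂ, (1/(2*π)) * ∫ θ in Ioc (-π) π, F w θ := by simp_rw [step1]
    _ = (1/(2*π)) * ∫ w : ℂ, ∫ θ in Ioc (-π) π, F w θ := integral_const_mul _ _
    _ = (1/(2*π)) * ∫ θ in Ioc (-π) π, ∫ w : ℂ, F w θ := by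
        rw [integral_integral_swap hFint]
    _ = (1/(2*π)) * ∫ θ in Ioc (-π) π, (π * σ^2 : ℝ) := by
        congr 1
        apply setIntegral_congr_fun measurableSet_Ioc
        intro θ _
        have h8 := MeasureTheory.integral_sub_right_eq_self (μ := (volume : Measure ℂ))
          (fun w : ℂ => Real.exp (-(‖w‖)^2 / σ^2)) ((c:ℂ) * Complex.exp (θ * Complex.I))
        show ∫ w : ℂ, F w θ = π * σ^2
        exact h8.trans hgauss
    _ = π * σ^2 := by
        rw [setIntegral_const, Measure.real, Real.volume_Ioc, smul_eq_mul]
        rw [ENNReal.toReal_ofReal (by linarith : (0:ℝ) ≤ π - -π)]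
        field_simp
        ring

lemma cont_kappa (σ c : ℝ) : Continuous (kappa σ c) := by
  unfold kappa
  exact (Real.continuous_exp.comp (by fun_prop)).mul (continuous_I0.comp (by fun_prop))

lemma int_pow_exp {b : ℝ} (hb : 0 < b) (n : ℕ) :
    IntegrableOn (fun r : ℝ => r^n * Real.exp (-b*r^2)) (Ioi 0) := by
  have h := integrableOn_rpow_mul_exp_neg_mul_sq hb (s := n)
    (by exact_mod_cast neg_one_lt_zero.trans_le (Nat.cast_nonneg (α := ℝ) n))
  apply h.congr_fun ?_ measurableSet_Ioi
  intro x hx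
  show x ^ (n:ℝ) * _ = _
  rw [Real.rpow_natCast]

lemma intOn_r_kappa {σ c : ℝ} (hσ : 0 < σ) (hc : 0 ≤ c) :
    IntegrableOn (fun r => r * kappa σ c r) (Ioi 0) := by
  apply Integrable.mono'
    (g := fun r => Real.exp (c^2/σ^2) * (r * Real.exp (-(1/(2*σ^2)) * r^2)))
  · exact ((integrable_mul_exp_neg_mul_sq (by positivity)).const_mul _).integrableOn
  · exact ((continuous_id.mul (cont_kappa σ c)).aestronglyMeasurable).restrict
  · filter_upwards [ae_restrict_mem measurableSet_Ioi] with r hr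
    have h1 := kappa_le hσ hc (le_of_lt hr)
    have h2 : 0 < kappa σ c r := kappa_pos σ c r
    rw [Real.norm_eq_abs, abs_of_nonneg (mul_nonneg hr.le h2.le)]
    calc r * kappa σ c r
        ≤ r * (Real.exp (c^2/σ^2) * Real.exp (-(1/(2*σ^2)) * r^2)) := by
          exact mul_le_mul_of_nonneg_left h1 hr.le
      _ = Real.exp (c^2/σ^2) * (r * Real.exp (-(1/(2*σ^2)) * r^2)) := by ring

lemma intOn_r_kappa_log {σ c : ℝ} (hσ : 0 < σ) (hc : 0 ≤ c) :
    IntegrableOn (fun r => r * kappa σ c r * Real.log (kappa σ c r)) (Ioi 0) := by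
  have hb : (0:ℝ) < 1/(2*σ^2) := by positivity
  set E : ℝ → ℝ := fun r => Real.exp (-(1/(2*σ^2)) * r^2) with hE
  set K : ℝ := Real.exp (c^2/σ^2) / σ^2 with hK
  apply Integrable.mono'
    (g := fun r => K * (r^3 * E r + c^2 * (r^1 * E r) + 2*c * (r^2 * E r)))
  · apply Integrable.const_mul
    exact ((int_pow_exp hb 3).add ((int_pow_exp hb 1).const_mul (c^2))).add
      ((int_pow_exp hb 2).const_mul (2*c))
  · apply ContinuousOn.aestronglyMeasurable ?_ measurableSet_Ioi
    apply ContinuousOn.mul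
    · exact (continuous_id.mul (cont_kappa σ c)).continuousOn
    · exact ContinuousOn.log (cont_kappa σ c).continuousOn
        (fun r _ => (kappa_pos σ c r).ne')
  · filter_upwards [ae_restrict_mem measurableSet_Ioi] with r hr
    have h1 := kappa_le hσ hc (le_of_lt hr)
    have h2 : 0 < kappa σ c r := kappa_pos σ c r
    have h3 := abs_log_kappa_le hσ hc (le_of_lt hr)
    rw [Real.norm_eq_abs, abs_mul, abs_mul, abs_of_nonneg hr.le, abs_of_nonneg h2.le]
    calc r * kappa σ c r * |Real.log (kappa σ c r)|
        ≤ r * kappa σ c r * ((r^2 + c^2 + 2*r*c) / σ^2) := by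
          exact mul_le_mul_of_nonneg_left h3 (mul_nonneg hr.le h2.le)
      _ ≤ r * (Real.exp (c^2/σ^2) * E r) * ((r^2 + c^2 + 2*r*c) / σ^2) := by
          apply mul_le_mul_of_nonneg_right ?_
            (div_nonneg (by nlinarith [(Set.mem_Ioi.mp hr).le, sq_nonneg r, sq_nonneg c]) (by positivity))
          exact mul_le_mul_of_nonneg_left h1 hr.le
      _ = K * (r^3 * E r + c^2 * (r^1 * E r) + 2*c * (r^2 * E r)) := by
          rw [hK]; field_simp

lemma int_r_kappa_val {σ c : ℝ} (hσ : 0 < σ) (hc : 0 ≤ c) :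
    ∫ r in Ioi (0:ℝ), r * kappa σ c r = σ^2/2 := by
  have h1 := polar_int (kappa σ c)
  rw [integral_c_kappa hσ hc] at h1
  have hπ : (0:ℝ) < π := pi_pos
  have h2 : ∫ r in Ioi (0:ℝ), r * kappa σ c r
      = (π * σ^2) / (2*π) := by
    rw [h1]; field_simp
  rw [h2]
  field_simp


/-- Theorem 1 of the paper: for the density `p(w) = κ_c(|w|)/(πσ²)` on `ℂ`, the differential
entropy of `p` minus the Gaussian noise entropy `ln(πeσ²)` equals the one-dimensional
expression `−∫_0^∞ (2r/σ²) κ_c(r) ln κ_c(r) dr − 1` (all in nats). -/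
theorem stmt5 (σ c : ℝ) (hσ : 0 < σ) (hc : 0 ≤ c) :
    (-(∫ w : ℂ, (kappa σ c (‖w‖) / (π * σ ^ 2))
          * Real.log (kappa σ c (‖w‖) / (π * σ ^ 2)))
        - Real.log (π * Real.exp 1 * σ ^ 2))
      = -(∫ r in Set.Ioi (0:ℝ), (2 * r / σ ^ 2) * kappa σ c r * Real.log (kappa σ c r)) - 1 := by
  have hπ : (0:ℝ) < π := pi_pos
  have hA : (0:ℝ) < π * σ^2 := by positivity
  have hσ2 : (0:ℝ) < σ^2 := by positivity
  have hp := polar_int (fun r => kappa σ c r / (π * σ ^ 2) * Real.log (kappa σ c r / (π * σ ^ 2)))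
  beta_reduce at hp
  rw [hp]
  set J := ∫ r in Set.Ioi (0:ℝ), r * kappa σ c r * Real.log (kappa σ c r) with hJ
  have e1 : ∫ r in Ioi (0:ℝ),
      r * (kappa σ c r / (π * σ ^ 2) * Real.log (kappa σ c r / (π * σ ^ 2)))
      = (π*σ^2)⁻¹ * J - (Real.log (π*σ^2) * (π*σ^2)⁻¹) * (σ^2/2) := by
    have e2 : ∀ r ∈ Ioi (0:ℝ),
        r * (kappa σ c r / (π * σ ^ 2) * Real.log (kappa σ c r / (π * σ ^ 2)))
        = (π*σ^2)⁻¹ * (r * kappa σ c r * Real.log (kappa σ c r))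
          - (Real.log (π*σ^2) * (π*σ^2)⁻¹) * (r * kappa σ c r) := by
      intro r _
      rw [Real.log_div (kappa_pos σ c r).ne' hA.ne']
      field_simp
    rw [setIntegral_congr_fun measurableSet_Ioi e2,
      integral_sub ((intOn_r_kappa_log hσ hc).const_mul _) ((intOn_r_kappa hσ hc).const_mul _),
      integral_const_mul, integral_const_mul, int_r_kappa_val hσ hc, ← hJ]
  have e3 : ∫ r in Set.Ioi (0:ℝ), (2 * r / σ ^ 2) * kappa σ c r * Real.log (kappa σ c r)
      = (2/σ^2) * J := by
    have e4 : ∀ r ∈ Ioi (0:ℝ),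
        (2 * r / σ ^ 2) * kappa σ c r * Real.log (kappa σ c r)
        = (2/σ^2) * (r * kappa σ c r * Real.log (kappa σ c r)) := by
      intro r _; ring
    rw [setIntegral_congr_fun measurableSet_Ioi e4, integral_const_mul, ← hJ]
  have e5 : Real.log (π * Real.exp 1 * σ^2) = Real.log (π*σ^2) + 1 := by
    rw [show π * Real.exp 1 * σ^2 = (π*σ^2) * Real.exp 1 by ring,
      Real.log_mul hA.ne' (Real.exp_pos _).ne', Real.log_exp]
  rw [e1, e3, e5]
  field_simp
  ring
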